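/- arXiv:1701.02400 — 2 statements merged into one kernel-verified Lean document; each statement's English description precedes it below -/
import Mathlib

section
/- Let μ be quasi-infinitely divisible with characteristic triplet (a, ν, γ)_c. Then a + ∫_ℝ x²/(1+x²) ν⁺(dx) ≥ ∫_ℝ x²/(1+x²) ν⁻(dx). -/
open MeasureTheory Complex Filter

noncomputable section

/-- Characteristic function of a measure on ℝ. -/
def charFn (μ : Measure ℝ) (z : ℝ) : ℂ := ∫ x, Complex.exp (Complex.I * z * x) ∂μ

/-- A representation function: bounded, Borel measurable, with (c x - x)/x² → 0 as x → 0. -/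
def IsRepFn (c : ℝ → ℝ) : Prop :=
  Measurable c ∧ (∃ M : ℝ, ∀ x, |c x| ≤ M) ∧
    Tendsto (fun x => (c x - x) / x ^ 2) (nhdsWithin 0 {(0:ℝ)}ᶜ) (nhds 0)

/-- The kernel g_c(x,z). -/
def gKer (c : ℝ → ℝ) (x z : ℝ) : ℂ :=
  if x = 0 then -(z:ℂ)^2 / 2
  else (Complex.exp (Complex.I * z * x) - 1 - Complex.I * z * c x) / ((min 1 (x^2) : ℝ) : ℂ)

/-- Quasi-infinitely divisible w.r.t. c: the characteristic function has a
Lévy–Khintchine type representation with a finite signed measure ζ = ζp - ζm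
(given by its Jordan decomposition). -/
def IsQID (c : ℝ → ℝ) (μ : Measure ℝ) : Prop :=
  ∃ γ : ℝ, ∃ ζp ζm : Measure ℝ, IsFiniteMeasure ζp ∧ IsFiniteMeasure ζm ∧
    Measure.MutuallySingular ζp ζm ∧
    ∀ z : ℝ, charFn μ z =
      Complex.exp (Complex.I * γ * z + (∫ x, gKer c x z ∂ζp) - ∫ x, gKer c x z ∂ζm)

/-- Infinitely divisible w.r.t. c: as above with a (positive) finite measure ζ. -/
def IsID (c : ℝ → ℝ) (μ : Measure ℝ) : Prop :=
  ∃ γ : ℝ, ∃ ζ : Measure ℝ, IsFiniteMeasure ζ ∧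
    ∀ z : ℝ, charFn μ z = Complex.exp (Complex.I * γ * z + ∫ x, gKer c x z ∂ζ)

/-- The Lévy–Khintchine integral ∫ (e^{izx} - 1 - izc(x)) dν. -/
def lkInt (c : ℝ → ℝ) (ν : Measure ℝ) (z : ℝ) : ℂ :=
  ∫ x, (Complex.exp (Complex.I * z * x) - 1 - Complex.I * z * c x) ∂ν

/-- μ has characteristic triplet (a, ν, γ) w.r.t. c, where the quasi-Lévy measure ν
is given by its Jordan decomposition ν = νp - νm. -/
def HasTriplet (c : ℝ → ℝ) (μ : Measure ℝ) (a : ℝ) (νp νm : Measure ℝ) (γ : ℝ) : Prop :=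
  Measure.MutuallySingular νp νm ∧ νp {0} = 0 ∧ νm {0} = 0 ∧
  (∫⁻ x, ENNReal.ofReal (min 1 (x^2)) ∂(νp + νm)) < ⊤ ∧
  ∀ z : ℝ, charFn μ z =
    Complex.exp (Complex.I * γ * z - a * z^2 / 2 + lkInt c νp z - lkInt c νm z)


section AuxLemmas
open Real Set


lemma one_sub_cos_nonneg (t : ℝ) : 0 ≤ 1 - Real.cos t := by
  linarith [Real.cos_le_one t]

lemma one_sub_cos_le_two (t : ℝ) : 1 - Real.cos t ≤ 2 := by
  linarith [Real.neg_one_le_cos t]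

lemma one_sub_cos_le_sq (t : ℝ) : 1 - Real.cos t ≤ t ^ 2 / 2 := by
  have h : Real.sin (t/2) ^ 2 = (1 - Real.cos t) / 2 := by
    have := Real.abs_sin_half t
    have h2 : Real.sin (t/2) ^ 2 = Real.sqrt ((1 - Real.cos t)/2) ^ 2 := by
      rw [← _root_.sq_abs, this]
    rw [h2, Real.sq_sqrt (by linarith [Real.cos_le_one t])]
  have h3 : Real.sin (t/2) ^ 2 ≤ (t/2) ^ 2 := Real.sin_sq_le_sq
  rw [h] at h3
  nlinarith

/-- An integrable pointwise bound `min(2, t²x²/2) ≤ (2 + z²/2)·min(1,x²)`. -/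
lemma one_sub_cos_mul_le (z x : ℝ) :
    1 - Real.cos (z * x) ≤ (2 + z ^ 2 / 2) * min 1 (x ^ 2) := by
  rcases le_total 1 (x ^ 2) with hx | hx
  · rw [min_eq_left hx]
    nlinarith [one_sub_cos_le_two (z*x), sq_nonneg z]
  · rw [min_eq_right hx]
    have := one_sub_cos_le_sq (z*x)
    have h2 : (z*x)^2/2 ≤ (2 + z^2/2) * x^2 := by nlinarith [sq_nonneg z, sq_nonneg x]
    linarith

/-- Fourier/Laplace: ∫_{0}^{∞} e^{-z} cos(xz) dz = 1/(1+x²). -/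
lemma integral_exp_neg_cos (x : ℝ) :
    ∫ z in Ioi (0:ℝ), Real.exp (-z) * Real.cos (x * z) = 1 / (1 + x ^ 2) := by
  have h1x : (0:ℝ) < 1 + x ^ 2 := by positivity
  set F : ℝ → ℝ := fun z => Real.exp (-z) * (x * Real.sin (x*z) - Real.cos (x*z)) / (1 + x^2)
    with hF
  have hderiv : ∀ z ∈ Ioi (0:ℝ), HasDerivAt F (Real.exp (-z) * Real.cos (x*z)) z := by
    intro z _
    have he : HasDerivAt (fun z : ℝ => Real.exp (-z)) (-Real.exp (-z)) z := by
      exact ((Real.hasDerivAt_exp (-z)).comp z (hasDerivAt_neg z)).congr_deriv (by ring)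
    have hinner : HasDerivAt (fun y : ℝ => x * y) x z := by
      simpa using (hasDerivAt_id z).const_mul x
    have hs : HasDerivAt (fun z : ℝ => Real.sin (x*z)) (Real.cos (x*z) * x) z := by
      exact (Real.hasDerivAt_sin (x*z)).comp z hinner
    have hcw : HasDerivAt (fun z : ℝ => Real.cos (x*z)) (-Real.sin (x*z) * x) z := by
      exact (Real.hasDerivAt_cos (x*z)).comp z hinner
    have h := ((he.mul ((hs.const_mul x).sub hcw)).div_const (1 + x^2))
    refine h.congr_deriv ?_
    simp only [Pi.sub_apply]
    rw [div_eq_iff h1x.ne']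
    ring
  have hint : IntegrableOn (fun z => Real.exp (-z) * Real.cos (x*z)) (Ioi (0:ℝ)) := by
    apply Integrable.mono' (g := fun z => Real.exp (-z))
    · exact (by simpa using exp_neg_integrableOn_Ioi 0 one_pos : IntegrableOn (fun z : ℝ => Real.exp (-z)) (Ioi 0))
    · exact ((Real.continuous_exp.comp continuous_neg).mul
        (Real.continuous_cos.comp (continuous_const.mul continuous_id))).aestronglyMeasurable
    · filter_upwards with z
      rw [norm_mul, Real.norm_eq_abs, Real.norm_eq_abs, abs_of_pos (Real.exp_pos _)]
      nlinarith [Real.abs_cos_le_one (x*z), Real.exp_pos (-z), abs_nonneg (Real.cos (x*z))]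
  have htends : Tendsto F atTop (nhds 0) := by
    refine squeeze_zero_norm (a := fun z => Real.exp (-z) * (|x| + 1) / (1 + x^2)) ?_ ?_
    · intro z
      rw [hF]
      simp only [norm_div, norm_mul, Real.norm_eq_abs, abs_of_pos (Real.exp_pos _),
        abs_of_pos h1x]
      gcongr
      calc |x * Real.sin (x*z) - Real.cos (x*z)| ≤ |x * Real.sin (x*z)| + |Real.cos (x*z)| :=
            abs_sub _ _
        _ ≤ |x| + 1 := by
            rw [abs_mul]
            gcongr
            · nlinarith [Real.abs_sin_le_one (x*z), abs_nonneg x, abs_nonneg (Real.sin (x*z))]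
            · exact Real.abs_cos_le_one _
    · have : Tendsto (fun z : ℝ => Real.exp (-z)) atTop (nhds 0) := by
        simpa using Real.tendsto_exp_neg_atTop_nhds_zero
      simpa using (this.mul_const ((|x| + 1))).div_const (1 + x^2)
  have hcont : ContinuousWithinAt F (Ici (0:ℝ)) 0 := by
    apply Continuous.continuousWithinAt
    fun_prop
  have := integral_Ioi_of_hasDerivAt_of_tendsto hcont hderiv hint htends
  rw [this, hF]
  simp only [neg_zero, Real.exp_zero, mul_zero, Real.sin_zero, Real.cos_zero, zero_sub,
    mul_zero, one_mul, zero_sub, mul_neg, mul_one]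
  field_simp

lemma integrableOn_sq_exp : IntegrableOn (fun z => Real.exp (-z) * z ^ 2) (Ioi (0:ℝ)) := by
  have h := Real.GammaIntegral_convergent (s := 3) (by norm_num)
  apply h.congr_fun ?_ measurableSet_Ioi
  intro z hz
  simp only
  rw [show (3:ℝ) - 1 = ((2:ℕ):ℝ) by norm_num, Real.rpow_natCast]

lemma integral_sq_exp : ∫ z in Ioi (0:ℝ), Real.exp (-z) * (z ^ 2 / 2) = 1 := by
  have h := Real.Gamma_eq_integral (s := 3) (by norm_num)
  have h3 : Real.Gamma 3 = 2 := by
    rw [show (3:ℝ) = (2:ℕ) + 1 by norm_num, Real.Gamma_nat_eq_factorial]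
    norm_num
  rw [h3] at h
  have h4 : ∫ z in Ioi (0:ℝ), Real.exp (-z) * z ^ 2 = 2 := by
    rw [h]
    apply setIntegral_congr_fun measurableSet_Ioi
    intro z hz
    simp only
    rw [show (3:ℝ) - 1 = ((2:ℕ):ℝ) by norm_num, Real.rpow_natCast]
  have h5 : ∀ z : ℝ, Real.exp (-z) * (z ^ 2 / 2) = (Real.exp (-z) * z ^ 2) / 2 := by
    intro z; ring
  simp only [h5]
  rw [integral_div, h4]
  norm_num


variable {c : ℝ → ℝ} {ν : Measure ℝ}

/-- Bound on the Lévy–Khintchine integrand. -/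
lemma exists_bound (hc : IsRepFn c) (z : ℝ) :
    ∃ K : ℝ, 0 ≤ K ∧ ∀ x : ℝ, x ≠ 0 →
      ‖Complex.exp (Complex.I * z * x) - 1 - Complex.I * z * c x‖ ≤ K * min 1 (x ^ 2) := by
  obtain ⟨M, hM⟩ := hc.2.1
  have hM0 : 0 ≤ M := le_trans (abs_nonneg _) (hM 0)
  have hev : ∀ᶠ x in nhdsWithin 0 {(0:ℝ)}ᶜ, |(c x - x) / x ^ 2| < 1 := by
    have := hc.2.2
    have h2 := this.eventually (eventually_abs_sub_lt 0 one_pos)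
    simpa using h2
  rw [eventually_nhdsWithin_iff, Metric.eventually_nhds_iff] at hev
  obtain ⟨δ₀, hδ₀, hδ⟩ := hev
  set δ : ℝ := min δ₀ (min 1 (1 / (|z| + 1))) with hδdef
  have hδpos : 0 < δ := by
    apply lt_min hδ₀
    apply lt_min one_pos
    positivity
  have hδ1 : δ ≤ 1 := le_trans (min_le_right _ _) (min_le_left _ _)
  refine ⟨max (z ^ 2 + |z|) ((2 + |z| * M) / min 1 (δ ^ 2)), le_max_of_le_left (by positivity),
    fun x hx => ?_⟩
  have hnorm_exp : ‖Complex.exp (Complex.I * z * x)‖ = 1 := by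
    rw [Complex.norm_exp]
    simp
  rcases lt_or_ge |x| δ with hxδ | hxδ
  · -- small x
    have hx2 : x ^ 2 ≤ 1 := by
      have : |x| ≤ 1 := le_of_lt (lt_of_lt_of_le hxδ hδ1)
      nlinarith [abs_nonneg x, _root_.sq_abs x]
    have hcx : |c x - x| ≤ x ^ 2 := by
      have h1 : |(c x - x) / x ^ 2| < 1 :=
        hδ (by simpa [Real.dist_eq] using lt_of_lt_of_le hxδ (min_le_left _ _)) (by simpa using hx)
      have hx2pos : (0:ℝ) < x ^ 2 := by positivity
      rw [abs_div, abs_of_pos hx2pos, div_lt_one hx2pos] at h1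
      exact le_of_lt h1
    have hzx : ‖Complex.I * z * x‖ ≤ 1 := by
      have : ‖Complex.I * z * x‖ = |z| * |x| := by
        simp
      rw [this]
      have h2 : |x| ≤ 1 / (|z| + 1) :=
        le_of_lt (lt_of_lt_of_le hxδ (le_trans (min_le_right _ _) (min_le_right _ _)))
      have h3 : (0:ℝ) < |z| + 1 := by positivity
      calc |z| * |x| ≤ |z| * (1 / (|z| + 1)) := by
            apply mul_le_mul_of_nonneg_left h2 (abs_nonneg z)
        _ ≤ 1 := by rw [mul_one_div, div_le_one h3]; linarith
    have hkey : ‖Complex.exp (Complex.I * z * x) - 1 - Complex.I * z * x‖ ≤ z ^ 2 * x ^ 2 := by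
      have := Complex.norm_exp_sub_one_sub_id_le hzx
      calc ‖Complex.exp (Complex.I * ↑z * ↑x) - 1 - Complex.I * ↑z * ↑x‖
          ≤ ‖Complex.I * ↑z * ↑x‖ ^ 2 := this
        _ = z ^ 2 * x ^ 2 := by
            simp [mul_pow, _root_.sq_abs]
    have hdiff : ‖Complex.I * (z:ℂ) * (c x : ℂ) - Complex.I * z * (x:ℂ)‖ ≤ |z| * x ^ 2 := by
      have : Complex.I * (z:ℂ) * (c x : ℂ) - Complex.I * z * (x:ℂ)
          = Complex.I * z * ((c x - x : ℝ) : ℂ) := by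
        push_cast; ring
      rw [this]
      rw [norm_mul, norm_mul]
      simp only [Complex.norm_I, Complex.norm_real, Real.norm_eq_abs, one_mul]
      exact mul_le_mul_of_nonneg_left hcx (abs_nonneg z)
    calc ‖Complex.exp (Complex.I * z * x) - 1 - Complex.I * z * c x‖
        = ‖(Complex.exp (Complex.I * z * x) - 1 - Complex.I * z * x)
            - (Complex.I * z * (c x : ℂ) - Complex.I * z * (x:ℂ))‖ := by ring_nf
      _ ≤ ‖Complex.exp (Complex.I * z * x) - 1 - Complex.I * z * x‖
            + ‖Complex.I * (z:ℂ) * (c x : ℂ) - Complex.I * z * (x:ℂ)‖ := norm_sub_le _ _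
      _ ≤ z ^ 2 * x ^ 2 + |z| * x ^ 2 := add_le_add hkey hdiff
      _ = (z ^ 2 + |z|) * x ^ 2 := by ring
      _ = (z ^ 2 + |z|) * min 1 (x ^ 2) := by rw [min_eq_right hx2]
      _ ≤ _ := by
          apply mul_le_mul_of_nonneg_right (le_max_left _ _)
          exact le_min zero_le_one (sq_nonneg x)
  · -- large x
    have hmin : min 1 (δ ^ 2) ≤ min 1 (x ^ 2) := by
      apply min_le_min le_rfl
      nlinarith [abs_nonneg x, _root_.sq_abs x, _root_.sq_abs δ, abs_of_pos hδpos]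
    have hminpos : (0:ℝ) < min 1 (δ ^ 2) := lt_min one_pos (by positivity)
    have hbig : ‖Complex.exp (Complex.I * z * x) - 1 - Complex.I * z * c x‖ ≤ 2 + |z| * M := by
      calc ‖Complex.exp (Complex.I * z * x) - 1 - Complex.I * z * c x‖
          ≤ ‖Complex.exp (Complex.I * z * x) - 1‖ + ‖Complex.I * (z:ℂ) * (c x : ℂ)‖ :=
            norm_sub_le _ _
        _ ≤ (‖Complex.exp (Complex.I * z * x)‖ + ‖(1:ℂ)‖) + |z| * |c x| := by
            apply add_le_add (norm_sub_le _ _)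
            simp
        _ ≤ (1 + 1) + |z| * M := by
            rw [hnorm_exp]
            simp only [norm_one, add_le_add_iff_left]
            exact mul_le_mul_of_nonneg_left (hM x) (abs_nonneg z)
        _ = 2 + |z| * M := by ring
    calc ‖Complex.exp (Complex.I * z * x) - 1 - Complex.I * z * c x‖ ≤ 2 + |z| * M := hbig
      _ = ((2 + |z| * M) / min 1 (δ ^ 2)) * min 1 (δ ^ 2) := by field_simp
      _ ≤ ((2 + |z| * M) / min 1 (δ ^ 2)) * min 1 (x ^ 2) := by
          apply mul_le_mul_of_nonneg_left hmin
          positivity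
      _ ≤ _ := by
          apply mul_le_mul_of_nonneg_right (le_max_right _ _)
          exact le_min zero_le_one (sq_nonneg x)

/-- Integrability from a `min 1 x²` bound (a.e. away from 0). -/
lemma integrable_of_min_bound {E : Type*} [NormedAddCommGroup E] {f : ℝ → E}
    (hm : AEStronglyMeasurable f ν)
    (hfin : (∫⁻ x, ENNReal.ofReal (min 1 (x^2)) ∂ν) < ⊤)
    (hν0 : ν {0} = 0) {K : ℝ} (hK : 0 ≤ K)
    (hb : ∀ x : ℝ, x ≠ 0 → ‖f x‖ ≤ K * min 1 (x ^ 2)) : Integrable f ν := by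
  refine ⟨hm, ?_⟩
  rw [hasFiniteIntegral_iff_norm]
  have hae : ∀ᵐ x ∂ν, x ≠ 0 := by
    rw [ae_iff]; simpa using hν0
  calc ∫⁻ x, ENNReal.ofReal ‖f x‖ ∂ν
      ≤ ∫⁻ x, ENNReal.ofReal K * ENNReal.ofReal (min 1 (x ^ 2)) ∂ν := by
        apply lintegral_mono_ae
        filter_upwards [hae] with x hx
        rw [← ENNReal.ofReal_mul hK]
        exact ENNReal.ofReal_le_ofReal (hb x hx)
    _ = ENNReal.ofReal K * ∫⁻ x, ENNReal.ofReal (min 1 (x ^ 2)) ∂ν :=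
        lintegral_const_mul' _ _ ENNReal.ofReal_ne_top
    _ < ⊤ := ENNReal.mul_lt_top ENNReal.ofReal_lt_top hfin

lemma measurable_lk_integrand (hc : IsRepFn c) (z : ℝ) :
    Measurable (fun x : ℝ => Complex.exp (Complex.I * z * x) - 1 - Complex.I * z * c x) := by
  have h1 : Measurable fun x : ℝ => Complex.exp (Complex.I * z * x) := by
    have he : (fun x : ℝ => Complex.I * z * x) = fun x : ℝ => (Complex.I * z) * (x:ℂ) := by
      funext x; ring
    exact Complex.measurable_exp.comp (he ▸ (Complex.measurable_ofReal.comp measurable_id).const_mul _)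
  have h2 : Measurable fun x : ℝ => Complex.I * z * (c x : ℂ) := by
    have he : (fun x : ℝ => Complex.I * z * (c x:ℂ)) = fun x : ℝ => (Complex.I * z) * ((c x):ℂ) := by
      funext x; ring
    exact he ▸ (Complex.measurable_ofReal.comp hc.1).const_mul _
  exact (h1.sub measurable_const).sub h2

/-- Integrability of the Lévy–Khintchine integrand. -/
lemma integrable_lk (hc : IsRepFn c)
    (hfin : (∫⁻ x, ENNReal.ofReal (min 1 (x^2)) ∂ν) < ⊤) (hν0 : ν {0} = 0) (z : ℝ) :
    Integrable (fun x : ℝ => Complex.exp (Complex.I * z * x) - 1 - Complex.I * z * c x) ν := by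
  obtain ⟨K, hK, hb⟩ := exists_bound hc z
  exact integrable_of_min_bound (measurable_lk_integrand hc z).aestronglyMeasurable
    hfin hν0 hK hb

lemma integrable_one_sub_cos
    (hfin : (∫⁻ x, ENNReal.ofReal (min 1 (x^2)) ∂ν) < ⊤) (hν0 : ν {0} = 0) (z : ℝ) :
    Integrable (fun x => 1 - Real.cos (z * x)) ν := by
  apply integrable_of_min_bound (f := fun x : ℝ => 1 - Real.cos (z * x))
    ?_ hfin hν0 (K := 2 + z ^ 2 / 2) (by positivity) ?_
  · exact (measurable_const.sub
      (Real.measurable_cos.comp (measurable_id.const_mul z))).aestronglyMeasurable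
  · intro x _
    rw [Real.norm_eq_abs, _root_.abs_of_nonneg (one_sub_cos_nonneg _)]
    exact one_sub_cos_mul_le z x

lemma integrable_sq_div
    (hfin : (∫⁻ x, ENNReal.ofReal (min 1 (x^2)) ∂ν) < ⊤) (hν0 : ν {0} = 0) :
    Integrable (fun x : ℝ => x ^ 2 / (1 + x ^ 2)) ν := by
  apply integrable_of_min_bound (f := fun x : ℝ => x ^ 2 / (1 + x ^ 2))
    ?_ hfin hν0 (K := 1) zero_le_one ?_
  · exact ((measurable_id.pow_const 2).div
      (measurable_const.add (measurable_id.pow_const 2))).aestronglyMeasurable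
  · intro x _
    have h1 : (0:ℝ) < 1 + x ^ 2 := by positivity
    rw [Real.norm_eq_abs, _root_.abs_of_nonneg (by positivity), one_mul]
    rcases le_total 1 (x ^ 2) with hx | hx
    · rw [min_eq_left hx, div_le_one h1]; linarith
    · rw [min_eq_right hx, div_le_iff₀ h1]
      nlinarith [sq_nonneg x]

/-- Real part of the Lévy–Khintchine integral. -/
lemma re_lkInt (hc : IsRepFn c)
    (hfin : (∫⁻ x, ENNReal.ofReal (min 1 (x^2)) ∂ν) < ⊤) (hν0 : ν {0} = 0) (z : ℝ) :
    (lkInt c ν z).re = - ∫ x, (1 - Real.cos (z * x)) ∂ν := by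
  have h0 : (∫ x, (Complex.exp (Complex.I * z * x) - 1 - Complex.I * z * c x) ∂ν).re
      = ∫ x, (Complex.exp (Complex.I * z * x) - 1 - Complex.I * z * c x).re ∂ν :=
    (integral_re (integrable_lk hc hfin hν0 z)).symm
  rw [lkInt, h0, ← integral_neg]
  apply integral_congr_ae
  filter_upwards with x
  have h : (Complex.exp (Complex.I * z * x) - 1 - Complex.I * z * c x).re
      = Real.cos (z * x) - 1 := by
    simp [Complex.exp_re, Complex.mul_re, Complex.mul_im]
  rw [h]
  ring

lemma integrable_min_one_sq
    (hfin : (∫⁻ x, ENNReal.ofReal (min 1 (x^2)) ∂ν) < ⊤) :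
    Integrable (fun x : ℝ => min 1 (x ^ 2)) ν := by
  refine ⟨(measurable_const.min (measurable_id.pow_const 2)).aestronglyMeasurable, ?_⟩
  rw [hasFiniteIntegral_iff_norm]
  have heq : (∫⁻ x, ENNReal.ofReal ‖min 1 (x ^ 2)‖ ∂ν) = ∫⁻ x, ENNReal.ofReal (min 1 (x ^ 2)) ∂ν :=
    lintegral_congr fun x => by
      rw [Real.norm_eq_abs, _root_.abs_of_nonneg (le_min zero_le_one (sq_nonneg x))]
  rw [heq]
  exact hfin

lemma J_nonneg (ν : Measure ℝ) (z : ℝ) : 0 ≤ ∫ x, (1 - Real.cos (z * x)) ∂ν :=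
  integral_nonneg fun x => one_sub_cos_nonneg _

lemma J_le (hfin : (∫⁻ x, ENNReal.ofReal (min 1 (x^2)) ∂ν) < ⊤) (hν0 : ν {0} = 0) (z : ℝ) :
    ∫ x, (1 - Real.cos (z * x)) ∂ν ≤ (2 + z ^ 2 / 2) * ∫ x, min 1 (x ^ 2) ∂ν := by
  rw [← integral_const_mul]
  apply integral_mono (integrable_one_sub_cos hfin hν0 z)
    ((integrable_min_one_sq hfin).const_mul _)
  intro x
  exact one_sub_cos_mul_le z x

lemma continuous_J (hfin : (∫⁻ x, ENNReal.ofReal (min 1 (x^2)) ∂ν) < ⊤) :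
    Continuous fun z : ℝ => ∫ x, (1 - Real.cos (z * x)) ∂ν := by
  rw [continuous_iff_continuousAt]
  intro z₀
  apply continuousAt_of_dominated (bound := fun x => (2 + (|z₀| + 1) ^ 2 / 2) * min 1 (x ^ 2))
  · filter_upwards with z
    exact (measurable_const.sub
      (Real.measurable_cos.comp (measurable_id.const_mul z))).aestronglyMeasurable
  · filter_upwards [eventually_abs_sub_lt z₀ one_pos] with z hz
    filter_upwards with x
    have hzb : |z| ≤ |z₀| + 1 := by
      have := abs_sub_abs_le_abs_sub z z₀
      linarith
    rw [Real.norm_eq_abs, _root_.abs_of_nonneg (one_sub_cos_nonneg _)]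
    calc 1 - Real.cos (z * x) ≤ (2 + z ^ 2 / 2) * min 1 (x ^ 2) := one_sub_cos_mul_le z x
      _ ≤ (2 + (|z₀| + 1) ^ 2 / 2) * min 1 (x ^ 2) := by
          apply mul_le_mul_of_nonneg_right _ (le_min zero_le_one (sq_nonneg x))
          have : z ^ 2 ≤ (|z₀| + 1) ^ 2 := by
            nlinarith [abs_nonneg z, abs_nonneg z₀, _root_.sq_abs z]
          linarith
  · exact (integrable_min_one_sq hfin).const_mul _
  · filter_upwards with x
    exact (continuous_const.sub
      (Real.continuous_cos.comp (continuous_id.mul continuous_const))).continuousAt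

lemma sigmaFinite_of_min (hfin : (∫⁻ x, ENNReal.ofReal (min 1 (x^2)) ∂ν) < ⊤)
    (hν0 : ν {0} = 0) : SigmaFinite ν := by
  set f : ℝ → ENNReal := fun x => ENNReal.ofReal (min 1 (x ^ 2)) with hf
  have hfmeas : Measurable f :=
    (measurable_const.min (measurable_id.pow_const 2)).ennreal_ofReal
  refine ⟨⟨⟨fun n => {x | ((n + 1 : ℕ) : ENNReal)⁻¹ ≤ f x} ∪ {0},
    fun n => Set.mem_univ _, fun n => ?_, ?_⟩⟩⟩
  · -- finiteness
    have hub : ν ({x | ((n + 1 : ℕ) : ENNReal)⁻¹ ≤ f x} ∪ {0})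
        ≤ ν {x | ((n + 1 : ℕ) : ENNReal)⁻¹ ≤ f x} := by
      calc ν ({x | ((n + 1 : ℕ) : ENNReal)⁻¹ ≤ f x} ∪ {0})
          ≤ ν {x | ((n + 1 : ℕ) : ENNReal)⁻¹ ≤ f x} + ν {0} := measure_union_le _ _
        _ = ν {x | ((n + 1 : ℕ) : ENNReal)⁻¹ ≤ f x} := by rw [hν0, add_zero]
    have hmark := mul_meas_ge_le_lintegral₀ (μ := ν) hfmeas.aemeasurable
      ((n + 1 : ℕ) : ENNReal)⁻¹
    have hne : ((n + 1 : ℕ) : ENNReal)⁻¹ ≠ 0 := by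
      simp
    have hlt : ν {x | ((n + 1 : ℕ) : ENNReal)⁻¹ ≤ f x} < ⊤ := by
      by_contra hcon
      push_neg at hcon
      have htop : ν {x | ((n + 1 : ℕ) : ENNReal)⁻¹ ≤ f x} = ⊤ := top_le_iff.mp hcon
      rw [htop, ENNReal.mul_top hne] at hmark
      rw [hf] at hmark
      exact absurd (lt_of_le_of_lt hmark hfin) (lt_irrefl ⊤)
    exact lt_of_le_of_lt hub hlt
  · -- spanning
    ext x
    simp only [Set.mem_iUnion, Set.mem_union, Set.mem_setOf_eq, Set.mem_singleton_iff,
      Set.mem_univ, iff_true]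
    rcases eq_or_ne x 0 with rfl | hx
    · exact ⟨0, Or.inr rfl⟩
    · have hpos : 0 < f x := by
        rw [hf]
        apply ENNReal.ofReal_pos.mpr
        have : (0:ℝ) < x ^ 2 := by positivity
        exact lt_min one_pos this
      obtain ⟨n, hn⟩ := ENNReal.exists_inv_nat_lt hpos.ne'
      refine ⟨n, Or.inl ?_⟩
      calc ((n + 1 : ℕ) : ENNReal)⁻¹ ≤ ((n : ℕ) : ENNReal)⁻¹ := by
            apply ENNReal.inv_le_inv.mpr
            exact_mod_cast Nat.cast_le.mpr (Nat.le_succ n)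
        _ ≤ f x := hn.le

lemma integrableOn_exp_one_sub_cos (x : ℝ) :
    IntegrableOn (fun z => Real.exp (-z) * (1 - Real.cos (z * x))) (Ioi (0:ℝ)) := by
  apply Integrable.mono' (g := fun z => 2 * Real.exp (-z))
  · simpa using (exp_neg_integrableOn_Ioi 0 one_pos).const_mul 2
  · exact ((Real.continuous_exp.comp continuous_neg).mul
      (continuous_const.sub (Real.continuous_cos.comp
        (continuous_id.mul continuous_const)))).aestronglyMeasurable
  · filter_upwards with z
    rw [Real.norm_eq_abs, abs_mul, _root_.abs_of_pos (Real.exp_pos _),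
      _root_.abs_of_nonneg (one_sub_cos_nonneg _)]
    nlinarith [one_sub_cos_le_two (z * x), Real.exp_pos (-z), one_sub_cos_nonneg (z * x)]

lemma integral_exp_one_sub_cos (x : ℝ) :
    ∫ z in Ioi (0:ℝ), Real.exp (-z) * (1 - Real.cos (z * x)) = x ^ 2 / (1 + x ^ 2) := by
  have h1x : (0:ℝ) < 1 + x ^ 2 := by positivity
  have hsplit : ∀ z : ℝ, Real.exp (-z) * (1 - Real.cos (z * x))
      = Real.exp (-z) - Real.exp (-z) * Real.cos (x * z) := by
    intro z; rw [mul_comm z x]; ring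
  rw [integral_congr_ae (Filter.Eventually.of_forall fun z => hsplit z)]
  rw [integral_sub]
  · rw [integral_exp_neg_Ioi_zero, integral_exp_neg_cos x]
    field_simp
    ring
  · exact (by simpa using exp_neg_integrableOn_Ioi 0 one_pos : IntegrableOn (fun z : ℝ => Real.exp (-z)) (Ioi 0))
  · apply Integrable.mono' (g := fun z => Real.exp (-z))
    · exact (by simpa using exp_neg_integrableOn_Ioi 0 one_pos : IntegrableOn (fun z : ℝ => Real.exp (-z)) (Ioi 0))
    · exact ((Real.continuous_exp.comp continuous_neg).mul
        (Real.continuous_cos.comp (continuous_const.mul continuous_id))).aestronglyMeasurable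
    · filter_upwards with z
      rw [Real.norm_eq_abs, abs_mul, _root_.abs_of_pos (Real.exp_pos _)]
      nlinarith [Real.abs_cos_le_one (x * z), Real.exp_pos (-z), abs_nonneg (Real.cos (x * z))]

lemma integrableOn_exp_mul_J
    (hfin : (∫⁻ x, ENNReal.ofReal (min 1 (x^2)) ∂ν) < ⊤) (hν0 : ν {0} = 0) :
    IntegrableOn (fun z => Real.exp (-z) * ∫ x, (1 - Real.cos (z * x)) ∂ν) (Ioi (0:ℝ)) := by
  set T := ∫ x, min 1 (x ^ 2) ∂ν with hT
  have hT0 : 0 ≤ T := integral_nonneg fun x => le_min zero_le_one (sq_nonneg x)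
  apply Integrable.mono' (g := fun z => (2 * Real.exp (-z) + Real.exp (-z) * z ^ 2 / 2) * T)
  · have := (((exp_neg_integrableOn_Ioi 0 one_pos).const_mul 2).add
      (integrableOn_sq_exp.div_const 2)).mul_const T
    simpa using this
  · exact ((Real.continuous_exp.comp continuous_neg).mul (continuous_J hfin)).aestronglyMeasurable
  · filter_upwards with z
    rw [Real.norm_eq_abs, abs_mul, _root_.abs_of_pos (Real.exp_pos _),
      _root_.abs_of_nonneg (J_nonneg ν z)]
    have h1 := J_le hfin hν0 z
    have h2 : Real.exp (-z) * ∫ x, (1 - Real.cos (z * x)) ∂ν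
        ≤ Real.exp (-z) * ((2 + z ^ 2 / 2) * T) :=
      mul_le_mul_of_nonneg_left h1 (Real.exp_pos _).le
    calc Real.exp (-z) * ∫ x, (1 - Real.cos (z * x)) ∂ν
        ≤ Real.exp (-z) * ((2 + z ^ 2 / 2) * T) := h2
      _ = (2 * Real.exp (-z) + Real.exp (-z) * z ^ 2 / 2) * T := by ring

lemma fubini_step
    (hfin : (∫⁻ x, ENNReal.ofReal (min 1 (x^2)) ∂ν) < ⊤) (hν0 : ν {0} = 0) :
    ∫ z in Ioi (0:ℝ), Real.exp (-z) * ∫ x, (1 - Real.cos (z * x)) ∂ν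
      = ∫ x, x ^ 2 / (1 + x ^ 2) ∂ν := by
  haveI : SigmaFinite ν := sigmaFinite_of_min hfin hν0
  have hL : 0 ≤ ∫ z in Ioi (0:ℝ), Real.exp (-z) * ∫ x, (1 - Real.cos (z * x)) ∂ν :=
    setIntegral_nonneg measurableSet_Ioi fun z _ =>
      mul_nonneg (Real.exp_pos _).le (J_nonneg ν z)
  have hR : 0 ≤ ∫ x, x ^ 2 / (1 + x ^ 2) ∂ν :=
    integral_nonneg fun x => by positivity
  rw [← ENNReal.ofReal_eq_ofReal_iff hL hR]
  -- LHS as a lintegral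
  rw [MeasureTheory.ofReal_integral_eq_lintegral_ofReal (integrableOn_exp_mul_J hfin hν0)
    (Filter.Eventually.of_forall fun z => mul_nonneg (Real.exp_pos _).le (J_nonneg ν z))]
  -- RHS as a lintegral
  rw [MeasureTheory.ofReal_integral_eq_lintegral_ofReal (integrable_sq_div hfin hν0)
    (Filter.Eventually.of_forall fun x => by positivity)]
  -- rewrite the LHS integrand as a double lintegral
  have hstep : ∀ z : ℝ, ENNReal.ofReal (Real.exp (-z) * ∫ x, (1 - Real.cos (z * x)) ∂ν)
      = ∫⁻ x, ENNReal.ofReal (Real.exp (-z) * (1 - Real.cos (z * x))) ∂ν := by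
    intro z
    rw [ENNReal.ofReal_mul (Real.exp_pos _).le,
      MeasureTheory.ofReal_integral_eq_lintegral_ofReal (integrable_one_sub_cos hfin hν0 z)
        (Filter.Eventually.of_forall fun x => one_sub_cos_nonneg _),
      ← lintegral_const_mul' _ _ ENNReal.ofReal_ne_top]
    congr 1
    funext x
    rw [← ENNReal.ofReal_mul (Real.exp_pos _).le]
  rw [lintegral_congr hstep]
  -- swap
  have hmeas : AEMeasurable (Function.uncurry fun (z x : ℝ) =>
      ENNReal.ofReal (Real.exp (-z) * (1 - Real.cos (z * x))))
      ((volume.restrict (Ioi (0:ℝ))).prod ν) := by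
    apply Measurable.aemeasurable
    apply Measurable.ennreal_ofReal
    apply Continuous.measurable
    fun_prop
  rw [lintegral_lintegral_swap hmeas]
  -- inner integral
  congr 1
  funext x
  rw [← MeasureTheory.ofReal_integral_eq_lintegral_ofReal (integrableOn_exp_one_sub_cos x)
    (Filter.Eventually.of_forall fun z => mul_nonneg (Real.exp_pos _).le (one_sub_cos_nonneg _)),
    integral_exp_one_sub_cos x]

end AuxLemmas

/-- a + ∫ x²/(1+x²) dν⁺ ≥ ∫ x²/(1+x²) dν⁻. -/
theorem stmt3 (c : ℝ → ℝ) (hc : IsRepFn c) (μ : Measure ℝ) [IsProbabilityMeasure μ]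
    (a γ : ℝ) (νp νm : Measure ℝ) (h : HasTriplet c μ a νp νm γ) :
    (∫ x, x ^ 2 / (1 + x ^ 2) ∂νm) ≤ a + ∫ x, x ^ 2 / (1 + x ^ 2) ∂νp := by
  obtain ⟨hsing, hp0, hm0, hfin, hrep⟩ := h
  rw [lintegral_add_measure] at hfin
  have hfinp : (∫⁻ x, ENNReal.ofReal (min 1 (x^2)) ∂νp) < ⊤ :=
    lt_of_le_of_lt le_self_add hfin
  have hfinm : (∫⁻ x, ENNReal.ofReal (min 1 (x^2)) ∂νm) < ⊤ :=
    lt_of_le_of_lt le_add_self hfin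
  -- pointwise inequality from |charFn| ≤ 1
  have key : ∀ z : ℝ, ∫ x, (1 - Real.cos (z * x)) ∂νm
      ≤ a * z ^ 2 / 2 + ∫ x, (1 - Real.cos (z * x)) ∂νp := by
    intro z
    have hnorm : ‖charFn μ z‖ ≤ 1 := by
      rw [charFn]
      calc ‖∫ x, Complex.exp (Complex.I * z * x) ∂μ‖
          ≤ ∫ x, ‖Complex.exp (Complex.I * z * x)‖ ∂μ := norm_integral_le_integral_norm _
        _ = ∫ x, (1:ℝ) ∂μ := by
            apply integral_congr_ae
            filter_upwards with x
            rw [Complex.norm_exp]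
            simp [Complex.mul_re, Complex.mul_im]
        _ = 1 := by simp
    rw [hrep z, Complex.norm_exp] at hnorm
    have hre := Real.exp_le_one_iff.mp hnorm
    have h1 : (Complex.I * γ * z).re = 0 := by
      simp [Complex.mul_re, Complex.mul_im]
    have h2 : ((a:ℂ) * (z:ℂ) ^ 2 / 2).re = a * z ^ 2 / 2 := by
      have he : ((a:ℂ) * (z:ℂ) ^ 2 / 2) = ((a * z ^ 2 / 2 : ℝ) : ℂ) := by
        push_cast; ring
      rw [he, Complex.ofReal_re]
    rw [Complex.sub_re, Complex.add_re, Complex.sub_re, h1, h2,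
      re_lkInt hc hfinp hp0 z, re_lkInt hc hfinm hm0 z] at hre
    linarith
  have hIm := integrableOn_exp_mul_J hfinm hm0
  have hIp := integrableOn_exp_mul_J hfinp hp0
  have hIq : IntegrableOn (fun z => a * (Real.exp (-z) * (z ^ 2 / 2))) (Set.Ioi (0:ℝ)) := by
    have he : ∀ z : ℝ, a * (Real.exp (-z) * (z ^ 2 / 2)) = a * ((Real.exp (-z) * z ^ 2) / 2) :=
      fun z => by ring
    simp only [he]
    exact (integrableOn_sq_exp.div_const 2).const_mul a
  have hmono : (∫ z in Set.Ioi (0:ℝ), Real.exp (-z) * ∫ x, (1 - Real.cos (z * x)) ∂νm)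
      ≤ ∫ z in Set.Ioi (0:ℝ), (a * (Real.exp (-z) * (z ^ 2 / 2))
          + Real.exp (-z) * ∫ x, (1 - Real.cos (z * x)) ∂νp) := by
    apply integral_mono hIm (hIq.add hIp)
    intro z
    calc Real.exp (-z) * ∫ x, (1 - Real.cos (z * x)) ∂νm
        ≤ Real.exp (-z) * (a * z ^ 2 / 2 + ∫ x, (1 - Real.cos (z * x)) ∂νp) :=
          mul_le_mul_of_nonneg_left (key z) (Real.exp_pos _).le
      _ = a * (Real.exp (-z) * (z ^ 2 / 2))
          + Real.exp (-z) * ∫ x, (1 - Real.cos (z * x)) ∂νp := by ring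
  rw [integral_add hIq hIp, integral_const_mul, integral_sq_exp, mul_one,
    fubini_step hfinm hm0, fubini_step hfinp hp0] at hmono
  exact hmono
end
end

section
/- The Bernoulli distribution b(1,p) = (1-p)δ₀ + pδ₁ is quasi-infinitely divisible if and only if p ≠ 1/2. -/
open MeasureTheory Complex Filter

noncomputable section

lemma norm_exp_I_mul (z x : ℝ) : ‖Complex.exp (Complex.I * z * x)‖ = 1 := by
  rw [Complex.norm_exp]
  norm_num [Complex.mul_re, Complex.mul_im]

lemma gKer_eq (c : ℝ → ℝ) (x z : ℝ) (hx : 1 ≤ x^2) :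
    gKer c x z = Complex.exp (Complex.I * z * x) - 1 - Complex.I * z * c x := by
  have hx0 : x ≠ 0 := by rintro rfl; norm_num at hx
  rw [gKer, if_neg hx0, min_eq_left hx]
  simp

lemma gKer_bound (c : ℝ → ℝ) (M : ℝ) (hM : ∀ x, |c x| ≤ M) (x z : ℝ) (hx : 1 ≤ x^2) :
    ‖gKer c x z‖ ≤ 2 + |z| * M := by
  rw [gKer_eq c x z hx]
  have h1 : ‖Complex.exp (Complex.I * z * x) - 1‖ ≤ 2 := by
    calc ‖Complex.exp (Complex.I * z * x) - 1‖
        ≤ ‖Complex.exp (Complex.I * z * x)‖ + ‖(1:ℂ)‖ := norm_sub_le _ _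
      _ ≤ 2 := by rw [norm_exp_I_mul]; norm_num
  have h2 : ‖Complex.I * z * c x‖ ≤ |z| * M := by
    rw [mul_assoc, norm_mul, Complex.norm_I, one_mul, norm_mul, Complex.norm_real,
      Complex.norm_real, Real.norm_eq_abs, Real.norm_eq_abs]
    exact mul_le_mul_of_nonneg_left (hM x) (abs_nonneg z)
  calc ‖Complex.exp (Complex.I * z * x) - 1 - Complex.I * z * c x‖
      ≤ ‖Complex.exp (Complex.I * z * x) - 1‖ + ‖Complex.I * z * c x‖ := norm_sub_le _ _
    _ ≤ 2 + |z| * M := add_le_add h1 h2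

lemma key (c : ℝ → ℝ) (M : ℝ) (hM : ∀ x, |c x| ≤ M) (q d z : ℝ)
    (hq0 : 0 < q) (hq1 : q < 1) (hd : d^2 = 1) :
    Complex.I * ((∑' k : ℕ, (-1:ℝ)^(k+1) * q^k / k * c (d*k)) : ℝ) * z
      + (∑' j : ℕ, ((q^(2*j+1)/(2*j+1) : ℝ) : ℂ) * gKer c (d*(2*j+1)) z)
      - (∑' j : ℕ, ((q^(2*j+2)/(2*j+2) : ℝ) : ℂ) * gKer c (d*(2*j+2)) z)
    = Complex.log (1 + q * Complex.exp (Complex.I * d * z))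
      - Complex.log (1 + (q:ℂ)) := by
  have hM0 : 0 ≤ M := le_trans (abs_nonneg _) (hM 0)
  -- the complex number w
  set w : ℂ := (q:ℂ) * Complex.exp (Complex.I * d * z) with hw
  have hwnorm : ‖w‖ = q := by
    rw [hw, norm_mul, norm_exp_I_mul, mul_one, Complex.norm_real, Real.norm_eq_abs,
      abs_of_pos hq0]
  have hw1 : ‖w‖ < 1 := by rw [hwnorm]; exact hq1
  have hq1' : ‖(q:ℂ)‖ < 1 := by
    rw [Complex.norm_real, Real.norm_eq_abs, abs_of_pos hq0]; exact hq1
  -- Taylor series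
  have T1 := Complex.hasSum_taylorSeries_log hw1
  have T2 := Complex.hasSum_taylorSeries_log hq1'
  -- the series for the constant C
  have hgeo : Summable (fun k : ℕ => M * q^k) :=
    (summable_geometric_of_lt_one hq0.le hq1).mul_left M
  have hcsum : Summable (fun k : ℕ => (-1:ℝ)^(k+1) * q^k / k * c (d*k)) := by
    refine Summable.of_norm_bounded hgeo fun k => ?_
    rcases Nat.eq_zero_or_pos k with rfl | hk
    · simp [hM0]
    · have h1 : (1:ℝ) ≤ (k:ℝ) := by exact_mod_cast hk
      rw [Real.norm_eq_abs, abs_mul, abs_div, abs_mul]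
      have e1 : |(-1:ℝ)^(k+1)| = 1 := by simp
      have e2 : |q^k| = q^k := abs_of_pos (pow_pos hq0 k)
      have e3 : |(k:ℝ)| = (k:ℝ) := abs_of_pos (by exact_mod_cast hk)
      rw [e1, e2, e3, one_mul]
      have hdiv : q^k / (k:ℝ) ≤ q^k := div_le_self (pow_nonneg hq0.le k) h1
      calc q^k / (k:ℝ) * |c (d*k)| ≤ q^k * M :=
              mul_le_mul hdiv (hM _) (abs_nonneg _) (pow_nonneg hq0.le k)
        _ = M * q^k := mul_comm _ _
  -- abbreviations
  set C : ℝ := ∑' k : ℕ, (-1:ℝ)^(k+1) * q^k / k * c (d*k) with hC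
  have T3 : HasSum (fun k : ℕ => ((((-1:ℝ)^(k+1) * q^k / k * c (d*k)) : ℝ) : ℂ)) (C:ℂ) :=
    Complex.hasSum_ofReal.mpr hcsum.hasSum
  set F : ℕ → ℂ := fun k => (-1)^(k+1) * (q:ℂ)^k / k * gKer c (d*k) z with hF
  have hwk : ∀ k : ℕ, w^k = (q:ℂ)^k * Complex.exp (Complex.I * z * ((d*(k:ℝ) : ℝ) : ℂ)) := by
    intro k
    rw [hw, mul_pow, ← Complex.exp_nat_mul]
    congr 1
    push_cast
    ring
  have hone_le : ∀ k : ℕ, 1 ≤ k → 1 ≤ (d*(k:ℝ))^2 := by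
    intro k hk
    have h1 : (1:ℝ) ≤ (k:ℝ) := by exact_mod_cast hk
    rw [mul_pow, hd, one_mul]
    nlinarith
  have TF : HasSum F (Complex.log (1+w) - Complex.log (1+(q:ℂ)) - Complex.I*(z:ℂ)*(C:ℂ)) := by
    have h := (T1.sub T2).sub (T3.mul_left (Complex.I*(z:ℂ)))
    convert h using 1
    · rfl
    funext k
    rcases Nat.eq_zero_or_pos k with rfl | hk
    · simp [hF]
    · rw [hF]
      simp only []
      rw [gKer_eq c _ z (hone_le k hk), hwk k]
      push_cast
      ring
  -- bound on F
  have hKnn : (0:ℝ) ≤ 2 + |z| * M := by positivity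
  have hFbound : ∀ k, ‖F k‖ ≤ (2 + |z| * M) * q^k := by
    intro k
    rcases Nat.eq_zero_or_pos k with rfl | hk
    · have : F 0 = 0 := by simp [hF]
      rw [this]
      simp [hKnn]
    · have h1 : (1:ℝ) ≤ (k:ℝ) := by exact_mod_cast hk
      have hg := gKer_bound c M hM (d*k) z (hone_le k hk)
      rw [hF]
      simp only [norm_mul, norm_div, norm_pow, norm_neg, norm_one, one_pow, one_mul,
        Complex.norm_natCast, Complex.norm_real, Real.norm_eq_abs]
      rw [abs_of_pos hq0]
      calc q^k / (k:ℝ) * ‖gKer c (d*(k:ℝ)) z‖ ≤ q^k * (2 + |z| * M) :=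
            mul_le_mul (div_le_self (pow_nonneg hq0.le k) h1) hg (norm_nonneg _)
              (pow_nonneg hq0.le k)
        _ = (2 + |z| * M) * q^k := mul_comm _ _
  have hgeo2 : Summable (fun k : ℕ => (2 + |z| * M) * q^k) :=
    (summable_geometric_of_lt_one hq0.le hq1).mul_left _
  have hFsummable : Summable F := Summable.of_norm_bounded hgeo2 hFbound
  -- summability of the two displayed series
  have hsumA : Summable (fun j : ℕ => ((q^(2*j+1)/(2*j+1) : ℝ) : ℂ) * gKer c (d*(2*j+1)) z) := by
    have : Summable (F ∘ (fun j : ℕ => 2*j+1)) :=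
      hFsummable.comp_injective (fun a b h => by omega)
    refine this.congr fun j => ?_
    simp only [Function.comp, hF]
    rw [show 2*j+1+1 = 2*(j+1) by ring, pow_mul]
    push_cast
    norm_num
  have hsumB : Summable (fun j : ℕ => ((q^(2*j+2)/(2*j+2) : ℝ) : ℂ) * gKer c (d*(2*j+2)) z) := by
    have : Summable (F ∘ (fun j : ℕ => 2*j+2)) :=
      hFsummable.comp_injective (fun a b h => by omega)
    refine (this.neg).congr fun j => ?_
    simp only [Function.comp, hF]
    rw [show 2*j+2+1 = 2*(j+1)+1 by ring, pow_succ, pow_mul]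
    push_cast
    norm_num
    ring
  set A : ℂ := ∑' j : ℕ, ((q^(2*j+1)/(2*j+1) : ℝ) : ℂ) * gKer c (d*(2*j+1)) z with hA
  set B : ℂ := ∑' j : ℕ, ((q^(2*j+2)/(2*j+2) : ℝ) : ℂ) * gKer c (d*(2*j+2)) z with hB
  have hOdd : HasSum (fun j : ℕ => F (2*j+1)) A := by
    refine HasSum.congr_fun hsumA.hasSum fun j => ?_
    simp only [hF]
    rw [show 2*j+1+1 = 2*(j+1) by ring, pow_mul]
    push_cast
    norm_num
  have hEven2 : HasSum (fun j : ℕ => F (2*(j+1))) (-B) := by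
    refine HasSum.congr_fun hsumB.hasSum.neg fun j => ?_
    simp only [hF]
    rw [show 2*(j+1)+1 = 2*(j+1)+1 by ring, pow_succ, pow_mul,
      show 2*(j+1) = 2*j+2 by ring]
    push_cast
    norm_num
    ring
  have hF0 : F 0 = 0 := by simp [hF]
  have hEven : HasSum (fun j : ℕ => F (2*j)) (-B) := by
    have h := (hasSum_nat_add_iff (f := fun j : ℕ => F (2*j)) 1).mp hEven2
    simpa [hF0] using h
  have htot : HasSum F (-B + A) := hEven.even_add_odd hOdd
  have heq : -B + A = Complex.log (1+w) - Complex.log (1+(q:ℂ)) - Complex.I*(z:ℂ)*(C:ℂ) :=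
    htot.unique TF
  rw [hw] at heq ⊢
  linear_combination heq

lemma measurable_expIzx (z : ℝ) : Measurable (fun x : ℝ => Complex.exp (Complex.I * z * x)) :=
  Complex.measurable_exp.comp ((Complex.measurable_ofReal).const_mul _)

lemma gKer_measurable (c : ℝ → ℝ) (hc : Measurable c) (z : ℝ) :
    Measurable (fun x => gKer c x z) := by
  unfold gKer
  refine Measurable.ite (measurableSet_singleton 0) measurable_const ?_
  refine Measurable.div ?_ ?_
  · refine ((measurable_expIzx z).sub measurable_const).sub ?_
    exact (Complex.measurable_ofReal.comp hc).const_mul _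
  · exact Complex.measurable_ofReal.comp ((measurable_const.min (measurable_id.pow_const 2)))

lemma charFn_bernoulli (p : ℝ) (hp0 : 0 ≤ p) (hp1 : p ≤ 1) (z : ℝ) :
    charFn (ENNReal.ofReal (1 - p) • Measure.dirac (0 : ℝ)
      + ENNReal.ofReal p • Measure.dirac (1 : ℝ)) z
      = (1 - p) + p * Complex.exp (Complex.I * z) := by
  have hm := measurable_expIzx z
  have hd : ∀ a : ℝ, Integrable (fun x : ℝ => Complex.exp (Complex.I * z * x))
      (Measure.dirac a) := by
    intro a
    refine Integrable.mono' (integrable_const 1) hm.aestronglyMeasurable ?_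
    filter_upwards with x
    rw [norm_exp_I_mul]
  rw [charFn, integral_add_measure ((hd 0).smul_measure (by simp))
    ((hd 1).smul_measure (by simp))]
  rw [integral_smul_measure, integral_smul_measure, integral_dirac _ _, integral_dirac _ _]
  simp [ENNReal.toReal_ofReal, hp0, sub_nonneg.mpr hp1, smul_eq_mul]

lemma integral_sum_smul_dirac (f : ℝ → ℂ) (hf : Measurable f) (w : ℕ → ℝ)
    (hw : ∀ n, 0 ≤ w n) (x : ℕ → ℝ) (hs : Summable (fun n => w n * ‖f (x n)‖)) :
    ∫ a, f a ∂(Measure.sum (fun n => ENNReal.ofReal (w n) • Measure.dirac (x n)))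
      = ∑' n, (w n : ℂ) * f (x n) := by
  have hint : Integrable f (Measure.sum (fun n => ENNReal.ofReal (w n) • Measure.dirac (x n))) := by
    refine ⟨hf.aestronglyMeasurable, ?_⟩
    rw [HasFiniteIntegral, lintegral_sum_measure]
    have : ∀ n, ∫⁻ a, ‖f a‖ₑ ∂(ENNReal.ofReal (w n) • Measure.dirac (x n))
        = ENNReal.ofReal (w n * ‖f (x n)‖) := by
      intro n
      rw [lintegral_smul_measure, lintegral_dirac' _ hf.enorm,
        ENNReal.ofReal_mul (hw n)]
      congr 1
      exact (ofReal_norm_eq_enorm _).symm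
    simp_rw [this]
    rw [← ENNReal.ofReal_tsum_of_nonneg (fun n => mul_nonneg (hw n) (norm_nonneg _)) hs]
    exact ENNReal.ofReal_lt_top
  rw [integral_sum_measure hint]
  congr 1
  funext n
  rw [integral_smul_measure, integral_dirac _ _, ENNReal.toReal_ofReal (hw n)]
  simp [smul_eq_mul]

lemma isFiniteMeasure_sum_smul_dirac (w : ℕ → ℝ) (hw : ∀ n, 0 ≤ w n) (x : ℕ → ℝ)
    (hs : Summable w) :
    IsFiniteMeasure (Measure.sum (fun n => ENNReal.ofReal (w n) • Measure.dirac (x n))) := by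
  constructor
  rw [Measure.sum_apply _ MeasurableSet.univ]
  simp only [Measure.smul_apply, Measure.dirac_apply, Set.mem_univ, smul_eq_mul]
  simp only [Set.indicator_univ, Pi.one_apply, mul_one]
  rw [← ENNReal.ofReal_tsum_of_nonneg hw hs]
  exact ENNReal.ofReal_lt_top

lemma mutsing_sum_smul_dirac (w v : ℕ → ℝ) (x y : ℕ → ℝ)
    (hxy : ∀ m n, x m ≠ y n) :
    Measure.MutuallySingular
      (Measure.sum (fun n => ENNReal.ofReal (w n) • Measure.dirac (x n)))
      (Measure.sum (fun n => ENNReal.ofReal (v n) • Measure.dirac (y n))) := by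
  refine ⟨(Set.range x)ᶜ, (Set.countable_range x).measurableSet.compl, ?_, ?_⟩
  · rw [Measure.sum_apply _ (Set.countable_range x).measurableSet.compl]
    refine ENNReal.tsum_eq_zero.mpr fun n => ?_
    simp only [Measure.smul_apply, smul_eq_mul]
    rw [Measure.dirac_apply]
    simp [Set.indicator_apply, Set.mem_range]
  · rw [compl_compl, Measure.sum_apply _ (Set.countable_range x).measurableSet]
    refine ENNReal.tsum_eq_zero.mpr fun n => ?_
    simp only [Measure.smul_apply, smul_eq_mul]
    rw [Measure.dirac_apply]
    have : y n ∉ Set.range x := by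
      rintro ⟨m, hm⟩
      exact hxy m n hm
    simp [Set.indicator_apply, this]

lemma construct (c : ℝ → ℝ) (hcm : Measurable c) (M : ℝ) (hM : ∀ x, |c x| ≤ M)
    (q d : ℝ) (hq0 : 0 < q) (hq1 : q < 1) (hd : d^2 = 1) :
    ∃ γ : ℝ, ∃ ζp ζm : Measure ℝ, IsFiniteMeasure ζp ∧ IsFiniteMeasure ζm ∧
      Measure.MutuallySingular ζp ζm ∧
      ∀ z : ℝ, Complex.exp (Complex.I * γ * z + (∫ x, gKer c x z ∂ζp) - ∫ x, gKer c x z ∂ζm)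
        = Complex.exp (Complex.I * ((1-d)/2 : ℝ) * z)
            * (1 + q * Complex.exp (Complex.I * d * z)) / (1 + q) := by
  have hd0 : d ≠ 0 := by
    intro h; rw [h] at hd; norm_num at hd
  have hM0 : 0 ≤ M := le_trans (abs_nonneg _) (hM 0)
  set wp : ℕ → ℝ := fun j => q^(2*j+1)/(2*j+1) with hwp
  set xp : ℕ → ℝ := fun j => d*(2*j+1) with hxp
  set wm : ℕ → ℝ := fun j => q^(2*j+2)/(2*j+2) with hwm
  set xm : ℕ → ℝ := fun j => d*(2*j+2) with hxm
  have hwp0 : ∀ n, 0 ≤ wp n := fun n => by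
    rw [hwp]; positivity
  have hwm0 : ∀ n, 0 ≤ wm n := fun n => by
    rw [hwm]; positivity
  have hwp_le : ∀ n : ℕ, wp n ≤ q^n := by
    intro n
    rw [hwp]
    refine le_trans (div_le_self (pow_nonneg hq0.le _) ?_)
      (pow_le_pow_of_le_one hq0.le hq1.le (by omega))
    have := Nat.cast_nonneg (α := ℝ) n
    linarith
  have hwm_le : ∀ n : ℕ, wm n ≤ q^n := by
    intro n
    rw [hwm]
    refine le_trans (div_le_self (pow_nonneg hq0.le _) ?_)
      (pow_le_pow_of_le_one hq0.le hq1.le (by omega))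
    have := Nat.cast_nonneg (α := ℝ) n
    linarith
  have hgeo : Summable (fun n : ℕ => q^n) := summable_geometric_of_lt_one hq0.le hq1
  have hswp : Summable wp := hgeo.of_nonneg_of_le hwp0 hwp_le
  have hswm : Summable wm := hgeo.of_nonneg_of_le hwm0 hwm_le
  refine ⟨(∑' k : ℕ, (-1:ℝ)^(k+1) * q^k / k * c (d*k)) + (1-d)/2,
    Measure.sum (fun n => ENNReal.ofReal (wp n) • Measure.dirac (xp n)),
    Measure.sum (fun n => ENNReal.ofReal (wm n) • Measure.dirac (xm n)),
    isFiniteMeasure_sum_smul_dirac wp hwp0 xp hswp,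
    isFiniteMeasure_sum_smul_dirac wm hwm0 xm hswm,
    mutsing_sum_smul_dirac wp wm xp xm ?_, ?_⟩
  · intro m n h
    rw [hxp, hxm] at h
    simp only [] at h
    have h2 : (2*(m:ℝ)+1) = (2*(n:ℝ)+2) := mul_left_cancel₀ hd0 h
    have h3 : ((2*m+1 : ℕ) : ℝ) = ((2*n+2 : ℕ) : ℝ) := by push_cast; linarith
    have h4 : 2*m+1 = 2*n+2 := Nat.cast_injective h3
    omega
  · intro z
    have hone_le : ∀ k : ℕ, 1 ≤ k → 1 ≤ (d*(k:ℝ))^2 := by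
      intro k hk
      have h1 : (1:ℝ) ≤ (k:ℝ) := by exact_mod_cast hk
      rw [mul_pow, hd, one_mul]
      nlinarith
    have hKnn : (0:ℝ) ≤ 2 + |z| * M := by positivity
    have hgm := gKer_measurable c hcm z
    have hbp : ∀ n : ℕ, wp n * ‖gKer c (xp n) z‖ ≤ (2 + |z| * M) * q^n := by
      intro n
      have hb := gKer_bound c M hM (xp n) z (by
        rw [hxp]
        have := hone_le (2*n+1) (by omega)
        push_cast at this ⊢
        linarith)
      calc wp n * ‖gKer c (xp n) z‖ ≤ q^n * (2 + |z| * M) :=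
            mul_le_mul (hwp_le n) hb (norm_nonneg _) (pow_nonneg hq0.le n)
        _ = (2 + |z| * M) * q^n := mul_comm _ _
    have hbm : ∀ n : ℕ, wm n * ‖gKer c (xm n) z‖ ≤ (2 + |z| * M) * q^n := by
      intro n
      have hb := gKer_bound c M hM (xm n) z (by
        rw [hxm]
        have := hone_le (2*n+2) (by omega)
        push_cast at this ⊢
        linarith)
      calc wm n * ‖gKer c (xm n) z‖ ≤ q^n * (2 + |z| * M) :=
            mul_le_mul (hwm_le n) hb (norm_nonneg _) (pow_nonneg hq0.le n)
        _ = (2 + |z| * M) * q^n := mul_comm _ _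
    rw [integral_sum_smul_dirac _ hgm wp hwp0 xp
        ((hgeo.mul_left _).of_nonneg_of_le
          (fun n => mul_nonneg (hwp0 n) (norm_nonneg _)) hbp),
      integral_sum_smul_dirac _ hgm wm hwm0 xm
        ((hgeo.mul_left _).of_nonneg_of_le
          (fun n => mul_nonneg (hwm0 n) (norm_nonneg _)) hbm)]
    have hk := key c M hM q d z hq0 hq1 hd
    have harg : Complex.I * ((∑' k : ℕ, (-1:ℝ)^(k+1) * q^k / k * c (d*k)) + (1-d)/2 : ℝ) * z
        + (∑' n : ℕ, ((wp n : ℝ) : ℂ) * gKer c (xp n) z)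
        - (∑' n : ℕ, ((wm n : ℝ) : ℂ) * gKer c (xm n) z)
        = (Complex.log (1 + q * Complex.exp (Complex.I * d * z)) - Complex.log (1 + (q:ℂ)))
          + Complex.I * ((1-d)/2 : ℝ) * z := by
      simp only [hwp, hxp, hwm, hxm]
      push_cast
      push_cast at hk
      linear_combination hk
    rw [harg]
    have h1w : (1 : ℂ) + q * Complex.exp (Complex.I * d * z) ≠ 0 := by
      intro h
      have : ‖(q:ℂ) * Complex.exp (Complex.I * d * z)‖ = 1 := by
        have : (q:ℂ) * Complex.exp (Complex.I * d * z) = -1 := by linear_combination h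
        rw [this]; simp
      rw [norm_mul, norm_exp_I_mul, mul_one, Complex.norm_real, Real.norm_eq_abs,
        abs_of_pos hq0] at this
      linarith
    have h1q : (1 : ℂ) + (q:ℂ) ≠ 0 := by
      intro h
      have : (1 + q : ℝ) = 0 := by exact_mod_cast h
      linarith
    rw [Complex.exp_add, Complex.exp_sub, Complex.exp_log h1w, Complex.exp_log h1q]
    ring

/-- the Bernoulli distribution b(1,p) = (1-p)δ₀ + pδ₁ is
quasi-infinitely divisible iff p ≠ 1/2. -/
theorem stmt10 (c : ℝ → ℝ) (hc : IsRepFn c) (p : ℝ) (hp : p ∈ Set.Ioo (0 : ℝ) 1)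
    (μ : Measure ℝ)
    (hμ : μ = ENNReal.ofReal (1 - p) • Measure.dirac (0 : ℝ)
      + ENNReal.ofReal p • Measure.dirac (1 : ℝ)) :
    IsQID c μ ↔ p ≠ 1 / 2 := by
  obtain ⟨hp0, hp1⟩ := hp
  obtain ⟨hcm, ⟨M, hM⟩, -⟩ := hc
  constructor
  · rintro ⟨γ, ζp, ζm, _, _, _, hrep⟩ hhalf
    have h0 : charFn μ Real.pi = 0 := by
      rw [hμ, charFn_bernoulli p hp0.le hp1.le, hhalf]
      rw [mul_comm Complex.I, Complex.exp_pi_mul_I]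
      norm_num
    rw [hrep Real.pi] at h0
    exact Complex.exp_ne_zero _ h0
  · intro hhalf
    rcases lt_or_gt_of_ne hhalf with hlt | hgt
    · -- p < 1/2 : q = p/(1-p), d = 1
      have h1p : (0:ℝ) < 1 - p := by linarith
      have hq0 : 0 < p / (1-p) := div_pos hp0 h1p
      have hq1 : p / (1-p) < 1 := by
        rw [div_lt_one h1p]; linarith
      obtain ⟨γ, ζp, ζm, hf1, hf2, hms, hrep⟩ :=
        construct c hcm M hM (p/(1-p)) 1 hq0 hq1 (by norm_num)
      refine ⟨γ, ζp, ζm, hf1, hf2, hms, fun z => ?_⟩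
      rw [hμ, charFn_bernoulli p hp0.le hp1.le, hrep z]
      have h1pC : (1:ℂ) - (p:ℂ) ≠ 0 := by
        intro h
        have : (1 - p : ℝ) = 0 := by exact_mod_cast h
        linarith
      have hden : (1:ℂ) + ((p/(1-p) : ℝ) : ℂ) ≠ 0 := by
        intro h
        have : (1 + p/(1-p) : ℝ) = 0 := by exact_mod_cast h
        have : (0:ℝ) < 1 + p/(1-p) := by positivity
        linarith
      rw [eq_div_iff hden]
      push_cast
      norm_num
      field_simp
      ring
    · -- p > 1/2 : q = (1-p)/p, d = -1
      have hq0 : 0 < (1-p) / p := div_pos (by linarith) hp0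
      have hq1 : (1-p) / p < 1 := by
        rw [div_lt_one hp0]; linarith
      obtain ⟨γ, ζp, ζm, hf1, hf2, hms, hrep⟩ :=
        construct c hcm M hM ((1-p)/p) (-1) hq0 hq1 (by norm_num)
      refine ⟨γ, ζp, ζm, hf1, hf2, hms, fun z => ?_⟩
      rw [hμ, charFn_bernoulli p hp0.le hp1.le, hrep z]
      have hpC : (p:ℂ) ≠ 0 := by
        intro h
        have : (p : ℝ) = 0 := by exact_mod_cast h
        linarith
      have hden : (1:ℂ) + (((1-p)/p : ℝ) : ℂ) ≠ 0 := by
        intro h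
        have h' : (1 + (1-p)/p : ℝ) = 0 := by exact_mod_cast h
        have : (0:ℝ) < 1 + (1-p)/p := by positivity
        linarith
      have hEE : Complex.exp (Complex.I * ((1:ℝ):ℂ) * (z:ℂ))
          * Complex.exp (Complex.I * ((-1:ℝ):ℂ) * (z:ℂ)) = 1 := by
        rw [← Complex.exp_add]
        push_cast
        ring_nf
        exact Complex.exp_zero
      rw [eq_div_iff hden]
      push_cast
      norm_num
      rw [Complex.exp_neg]
      have hne : Complex.exp (Complex.I * (z:ℂ)) ≠ 0 := Complex.exp_ne_zero _
      field_simp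
      ring
end
end
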